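/- Define g : ℝ → ℝ by g(x) = (1/6)·(3 - 2x + √(6 - 6√2·x + 4x²)) (the radicand 6 - 6√2·x + 4x² is positive for all real x). Then for every real e with 0 ≤ e ≤ 1/3, the infimum over all real x of x·e + g(x) equals 1/2 - (1 - 3e)/(2√2) + √((1 - (1 - 3e)²)/24). -/

import Mathlib

open Real

private lemma sarg04_tail_bound (a r x ε : ℝ) (ha0 : 0 < a) (ha2 : a ^ 2 = 2) (hr0 : 0 ≤ r)
    (hr2 : r ^ 2 = 6 - 6 * a * x + 4 * x ^ 2) (hx3 : 3 ≤ x) (hε : 0 < ε) (h1x : 1 ≤ ε * x) :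
    r ≤ 2 * x - 3 * a / 2 + 6 * ε := by
  have ha32 : a < 3 / 2 := by nlinarith
  have hApos : (0:ℝ) < 2 * x - 3 * a / 2 := by nlinarith
  nlinarith [mul_pos hε (lt_of_lt_of_le (by norm_num : (0:ℝ) < 3) hx3),
    sq_nonneg (r - (2 * x - 3 * a / 2)), mul_nonneg hε.le hr0]

/-- For `g(x) = (1/6)(3 - 2x + √(6 - 6√2 x + 4x²))` (with positive radicand), and any
bit error rate `e ∈ [0, 1/3]`, the infimum over `x` of `x e + g(x)` equals
`1/2 - (1 - 3e)/(2√2) + √((1 - (1 - 3e)²)/24)`. -/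
theorem sarg04_two_photon_worst_phase_error
    (g : ℝ → ℝ)
    (hg : ∀ x : ℝ, g x = (1 / 6) * (3 - 2 * x + Real.sqrt (6 - 6 * Real.sqrt 2 * x + 4 * x ^ 2)))
    (e : ℝ) (he0 : 0 ≤ e) (he1 : e ≤ 1 / 3) :
    (∀ x : ℝ, 0 < 6 - 6 * Real.sqrt 2 * x + 4 * x ^ 2) ∧
      sInf (Set.range fun x : ℝ => x * e + g x)
        = 1 / 2 - (1 - 3 * e) / (2 * Real.sqrt 2) + Real.sqrt ((1 - (1 - 3 * e) ^ 2) / 24) := by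
  have ha0 : (0:ℝ) < Real.sqrt 2 := Real.sqrt_pos.mpr (by norm_num)
  set a := Real.sqrt 2 with ha_def
  have ha2 : a ^ 2 = 2 := Real.sq_sqrt (by norm_num)
  have hb0 : (0:ℝ) < Real.sqrt 6 := Real.sqrt_pos.mpr (by norm_num)
  set b := Real.sqrt 6 with hb_def
  have hb2 : b ^ 2 = 6 := Real.sq_sqrt (by norm_num)
  set t := 1 - 3 * e with ht_def
  have ht0 : 0 ≤ t := by rw [ht_def]; linarith
  have ht1 : t ≤ 1 := by rw [ht_def]; linarith
  set s := Real.sqrt (1 - t ^ 2) with hs_def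
  have hs0 : 0 ≤ s := Real.sqrt_nonneg _
  have hs2 : s ^ 2 = 1 - t ^ 2 := Real.sq_sqrt (by nlinarith)
  have he : e = (1 - t) / 3 := by rw [ht_def]; ring
  have h24 : Real.sqrt ((1 - t ^ 2) / 24) = s / (2 * b) := by
    rw [Real.sqrt_div (by nlinarith [sq_nonneg s]) 24, ← hs_def]
    have h2b : Real.sqrt 24 = 2 * b := by
      rw [show (24:ℝ) = (2 * b) ^ 2 by nlinarith [hb2], Real.sqrt_sq (by positivity)]
    rw [h2b]
  clear_value s t b a
  -- positivity of the radicand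
  have hqpos : ∀ x : ℝ, 0 < 6 - 6 * a * x + 4 * x ^ 2 := by
    intro x; nlinarith [sq_nonneg (4 * x - 3 * a), ha2]
  -- rewrite the target value
  have hM : 1 / 2 - t / (2 * a) + Real.sqrt ((1 - t ^ 2) / 24)
      = 1 / 2 - a * t / 4 + b * s / 12 := by
    have e1 : t / (2 * a) = a * t / 4 := by
      field_simp; linear_combination (-2 * t) * ha2
    have e2 : s / (2 * b) = b * s / 12 := by
      field_simp; linear_combination (-2 * s) * hb2
    rw [h24, e1, e2]
  -- the key lower bound
  have lb : ∀ x : ℝ, 1 / 2 - a * t / 4 + b * s / 12 ≤ x * e + g x := by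
    intro x
    rw [hg x]
    have hq := hqpos x
    have hr0 : 0 ≤ Real.sqrt (6 - 6 * a * x + 4 * x ^ 2) := Real.sqrt_nonneg _
    have hr2 : (Real.sqrt (6 - 6 * a * x + 4 * x ^ 2)) ^ 2 = 6 - 6 * a * x + 4 * x ^ 2 :=
      Real.sq_sqrt hq.le
    set r := Real.sqrt (6 - 6 * a * x + 4 * x ^ 2) with hr_def
    clear_value r
    have key : 4 * (6 - 6 * a * x + 4 * x ^ 2)
        = (b * s - 3 * a * t + 4 * t * x) ^ 2 + (4 * s * x - 3 * a * s - b * t) ^ 2 := by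
      linear_combination (-(16 * x ^ 2 - 24 * a * x + b ^ 2 + 9 * a ^ 2)) * hs2 - hb2 - 9 * ha2
    have hR : b * s - 3 * a * t + 4 * t * x ≤ 2 * r := by
      nlinarith [sq_nonneg (4 * s * x - 3 * a * s - b * t), hr0, hr2, key]
    have hxe : x * e = x / 3 - x * t / 3 := by rw [he]; ring
    rw [hxe]
    linarith [hR]
  have hbdd : BddBelow (Set.range fun x : ℝ => x * e + g x) := by
    refine ⟨1 / 2 - a * t / 4 + b * s / 12, ?_⟩
    rintro y ⟨x, rfl⟩
    exact lb x
  have hne : (Set.range fun x : ℝ => x * e + g x).Nonempty := ⟨_, ⟨0, rfl⟩⟩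
  refine ⟨hqpos, ?_⟩
  rw [hM]
  apply le_antisymm
  · -- sInf ≤ M
    by_cases ht : t < 1
    · -- the minimizer exists
      have hspos : 0 < s := by
        rcases lt_or_eq_of_le hs0 with h | h
        · exact h
        · exfalso; nlinarith [hs2]
      set x₀ := (3 * a * s + b * t) / (4 * s) with hx0_def
      have hx0eq : 4 * s * x₀ = 3 * a * s + b * t := by
        rw [hx0_def]; field_simp
      clear_value x₀
      have hq0' : (6 - 6 * a * x₀ + 4 * x₀ ^ 2) * (4 * s ^ 2) = b ^ 2 := by
        linear_combination (4 * s * x₀ - 3 * a * s + b * t) * hx0eq + (-9 * s ^ 2) * ha2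
          + (-s ^ 2) * hb2 + b ^ 2 * hs2
      have hq0 : 6 - 6 * a * x₀ + 4 * x₀ ^ 2 = (b / (2 * s)) ^ 2 := by
        rw [div_pow, eq_div_iff (by positivity)]
        linear_combination hq0'
      have hsq : Real.sqrt (6 - 6 * a * x₀ + 4 * x₀ ^ 2) = b / (2 * s) := by
        rw [hq0, Real.sqrt_sq (by positivity)]
      have hval : x₀ * e + g x₀ = 1 / 2 - a * t / 4 + b * s / 12 := by
        rw [hg x₀, hsq, he]
        field_simp
        linear_combination (-144 * t) * hx0eq + (-144 * b) * hs2
      calc sInf (Set.range fun x : ℝ => x * e + g x) ≤ x₀ * e + g x₀ :=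
            csInf_le hbdd ⟨x₀, rfl⟩
        _ = _ := hval
    · -- t = 1, e = 0 : the infimum is approached as x → ∞
      have ht1' : t = 1 := le_antisymm ht1 (not_lt.mp ht)
      have he0' : e = 0 := by rw [he, ht1']; norm_num
      have hs0' : s = 0 := by
        have h : s ^ 2 = 0 := by rw [hs2, ht1']; ring
        exact pow_eq_zero_iff (by norm_num) |>.mp h
      rw [ht1', hs0']
      apply le_of_forall_pos_le_add
      intro ε hε
      set x := max 3 ε⁻¹ with hx_def
      have hx3 : (3:ℝ) ≤ x := le_max_left _ _
      have hxε : ε⁻¹ ≤ x := le_max_right _ _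
      clear_value x
      have hxpos : (0:ℝ) < x := lt_of_lt_of_le (by norm_num) hx3
      have h1x : 1 ≤ ε * x := by
        calc (1:ℝ) = ε * ε⁻¹ := by field_simp
          _ ≤ ε * x := mul_le_mul_of_nonneg_left hxε hε.le
      have step : sInf (Set.range fun x : ℝ => x * e + g x) ≤ x * e + g x :=
        csInf_le hbdd ⟨x, rfl⟩
      have hq := hqpos x
      have hbound : x * e + g x ≤ 1 / 2 - a * 1 / 4 + b * 0 / 12 + ε := by
        rw [he0', hg x]
        have hr0 : 0 ≤ Real.sqrt (6 - 6 * a * x + 4 * x ^ 2) := Real.sqrt_nonneg _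
        have hr2 : (Real.sqrt (6 - 6 * a * x + 4 * x ^ 2)) ^ 2 = 6 - 6 * a * x + 4 * x ^ 2 :=
          Real.sq_sqrt hq.le
        set r := Real.sqrt (6 - 6 * a * x + 4 * x ^ 2) with hr_def
        clear_value r
        have hkey : r ≤ 2 * x - 3 * a / 2 + 6 * ε :=
          sarg04_tail_bound a r x ε ha0 ha2 hr0 hr2 hx3 hε h1x
        linarith [hkey]
      linarith
  · exact le_csInf hne (by rintro y ⟨x, rfl⟩; exact lb x)
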